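/- For the classical Toda case τ(L) = L: if exp(t L₀) = R(t) Q(t) is the decomposition with R(t) lower-triangular and Q(t) orthogonal, then L(t) = Q(t) L₀ Q(t)ᵀ satisfies dL/dt = [M(L), L] with L(0) = L₀, where for symmetric L, M(L) = L₊ − L₊ᵀ with L₊ the strictly upper-triangular part of L. -/

import Mathlib

open NormedSpace Matrix

lemma expEntryDeriv {n : ℕ} (L₀ : Matrix (Fin n) (Fin n) ℝ) (t : ℝ) (i j : Fin n) :
    HasDerivAt (fun s : ℝ => exp (s • L₀) i j) ((L₀ * exp (t • L₀)) i j) t := by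
  letI : SeminormedRing (Matrix (Fin n) (Fin n) ℝ) := Matrix.linftyOpSemiNormedRing
  letI : NormedRing (Matrix (Fin n) (Fin n) ℝ) := Matrix.linftyOpNormedRing
  letI : NormedAlgebra ℝ (Matrix (Fin n) (Fin n) ℝ) := Matrix.linftyOpNormedAlgebra
  have h := hasDerivAt_exp_smul_const' (𝕂 := ℝ) L₀ t
  let E : Matrix (Fin n) (Fin n) ℝ →ₗ[ℝ] ℝ :=
    { toFun := fun M => M i j, map_add' := fun _ _ => rfl, map_smul' := fun _ _ => rfl }
  have hE : Continuous E := E.continuous_of_finiteDimensional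
  exact ((ContinuousLinearMap.mk E hE).hasFDerivAt).comp_hasDerivAt t h

lemma expEntryDeriv' {n : ℕ} (L₀ : Matrix (Fin n) (Fin n) ℝ) (t : ℝ) (i j : Fin n) :
    HasDerivAt (fun s : ℝ => exp (s • L₀) i j) ((exp (t • L₀) * L₀) i j) t := by
  letI : SeminormedRing (Matrix (Fin n) (Fin n) ℝ) := Matrix.linftyOpSemiNormedRing
  letI : NormedRing (Matrix (Fin n) (Fin n) ℝ) := Matrix.linftyOpNormedRing
  letI : NormedAlgebra ℝ (Matrix (Fin n) (Fin n) ℝ) := Matrix.linftyOpNormedAlgebra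
  have h := hasDerivAt_exp_smul_const (𝕂 := ℝ) L₀ t
  let E : Matrix (Fin n) (Fin n) ℝ →ₗ[ℝ] ℝ :=
    { toFun := fun M => M i j, map_add' := fun _ _ => rfl, map_smul' := fun _ _ => rfl }
  have hE : Continuous E := E.continuous_of_finiteDimensional
  exact ((ContinuousLinearMap.mk E hE).hasFDerivAt).comp_hasDerivAt t h

lemma mulEntryDeriv {n : ℕ} {F G : ℝ → Matrix (Fin n) (Fin n) ℝ}
    {F' G' : Matrix (Fin n) (Fin n) ℝ} {t : ℝ}
    (hF : ∀ i j, HasDerivAt (fun s => F s i j) (F' i j) t)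
    (hG : ∀ i j, HasDerivAt (fun s => G s i j) (G' i j) t) (i j : Fin n) :
    HasDerivAt (fun s => (F s * G s) i j) ((F' * G t + F t * G') i j) t := by
  simp only [Matrix.mul_apply, Matrix.add_apply]
  simpa [Finset.sum_add_distrib] using
    HasDerivAt.fun_sum (u := Finset.univ) (fun k _ => (hF i k).mul (hG k j))

/-- The projection of `gl_n` onto skew-symmetric matrices along lower-triangular matrices;
for symmetric `L` it equals `L₊ − L₊ᵀ` with `L₊` the strictly upper-triangular part. -/
def Mproj {n : ℕ} (X : Matrix (Fin n) (Fin n) ℝ) : Matrix (Fin n) (Fin n) ℝ :=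
  Matrix.of fun i j => if i < j then X i j else if j < i then -X j i else 0

/-- QR-decomposition solution of the classical full symmetric Toda flow: if
`exp(t L₀) = R(t) Q(t)` with `R(t)` lower-triangular with positive diagonal and `Q(t)`
orthogonal, then `L(t) = Q(t) L₀ Q(t)ᵀ` solves `dL/dt = [M(L), L]` with `L(0) = L₀`. -/
theorem stmt15 {n : ℕ}
    (L₀ : Matrix (Fin n) (Fin n) ℝ) (hL₀ : L₀.transpose = L₀)
    (R Q : ℝ → Matrix (Fin n) (Fin n) ℝ)
    (hdec : ∀ t : ℝ, NormedSpace.exp (t • L₀) = R t * Q t)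
    (hR : ∀ t, ∀ i j : Fin n, i < j → R t i j = 0)
    (hRdiag : ∀ t (i : Fin n), 0 < R t i i)
    (hQ : ∀ t, Q t * (Q t).transpose = 1)
    (hQ0 : Q 0 = 1)
    (R' Q' : ℝ → Matrix (Fin n) (Fin n) ℝ)
    (hdR : ∀ t (i j : Fin n), HasDerivAt (fun s => R s i j) (R' t i j) t)
    (hdQ : ∀ t (i j : Fin n), HasDerivAt (fun s => Q s i j) (Q' t i j) t) :
    Q 0 * L₀ * (Q 0).transpose = L₀ ∧
    ∀ t (i j : Fin n), HasDerivAt (fun s => (Q s * L₀ * (Q s).transpose) i j)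
      ((Mproj (Q t * L₀ * (Q t).transpose) * (Q t * L₀ * (Q t).transpose)
        - (Q t * L₀ * (Q t).transpose) * Mproj (Q t * L₀ * (Q t).transpose)) i j) t := by
  constructor
  · simp [hQ0]
  intro t
  set A : Matrix (Fin n) (Fin n) ℝ := Q' t * (Q t)ᵀ with hAdef
  set L : Matrix (Fin n) (Fin n) ℝ := Q t * L₀ * (Q t)ᵀ with hLdef
  have hQQ : (Q t)ᵀ * Q t = 1 := mul_eq_one_comm.mp (hQ t)
  -- transposed entrywise derivatives of Q
  have hQt' : ∀ i j, HasDerivAt (fun s => (Q s)ᵀ i j) ((Q' t)ᵀ i j) t := by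
    intro i j
    simpa [Matrix.transpose_apply] using hdQ t j i
  -- key differential identity from the decomposition
  have key : L₀ * (R t * Q t) = R' t * Q t + R t * Q' t := by
    ext i j
    have h1 : HasDerivAt (fun s => (R s * Q s) i j) ((L₀ * (R t * Q t)) i j) t := by
      have h := expEntryDeriv L₀ t i j
      simp only [hdec] at h
      exact h
    have h2 := mulEntryDeriv (hdR t) (hdQ t) i j
    exact h1.unique h2
  -- exp commutes with L₀
  have hcommE : (R t * Q t) * L₀ = L₀ * (R t * Q t) := by
    ext i j
    have h1 : HasDerivAt (fun s => (R s * Q s) i j) (((R t * Q t) * L₀) i j) t := by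
      have h := expEntryDeriv' L₀ t i j
      simp only [hdec] at h
      exact h
    have h2 : HasDerivAt (fun s => (R s * Q s) i j) ((L₀ * (R t * Q t)) i j) t := by
      have h := expEntryDeriv L₀ t i j
      simp only [hdec] at h
      exact h
    exact h1.unique h2
  -- skew-symmetry of A
  have hzero : Q' t * (Q t)ᵀ + Q t * (Q' t)ᵀ = 0 := by
    ext i j
    have h1 := mulEntryDeriv (hdQ t) hQt' i j
    have h2 : HasDerivAt (fun s => (Q s * (Q s)ᵀ) i j) 0 t := by
      have : (fun s => (Q s * (Q s)ᵀ) i j) = fun _ => (1 : Matrix (Fin n) (Fin n) ℝ) i j := by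
        funext s; rw [hQ s]
      rw [this]
      exact hasDerivAt_const t _
    have := h1.unique h2
    simpa using this
  have hAskew : Aᵀ = -A := by
    rw [hAdef, Matrix.transpose_mul, Matrix.transpose_transpose]
    exact eq_neg_of_add_eq_zero_right hzero
  -- key2 : L₀ R = R' + R A
  have key2 : L₀ * R t = R' t + R t * A := by
    have h1 : L₀ * R t = L₀ * (R t * Q t) * (Q t)ᵀ := by
      rw [mul_assoc, mul_assoc, hQ t, mul_one]
    rw [h1, key, add_mul, mul_assoc (R' t), hQ t, mul_one, mul_assoc, hAdef]
  -- R L = L₀ R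
  have hRL : R t * L = L₀ * R t := by
    have h1 : R t * L = (R t * Q t) * L₀ * (Q t)ᵀ := by simp [hLdef, mul_assoc]
    rw [h1, hcommE, mul_assoc L₀, mul_assoc (R t), hQ t, mul_one]
  have hRdiff : R t * (L - A) = R' t := by
    rw [mul_sub, hRL, key2, add_sub_cancel_right]
  -- R is invertible lower triangular
  have hBT : (R t).BlockTriangular OrderDual.toDual := fun i j h => hR t i j h
  have hunit : IsUnit (R t).det := by
    rw [Matrix.det_of_lowerTriangular _ hBT]
    exact (Finset.prod_pos (fun i _ => hRdiag t i)).ne'.isUnit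
  haveI := (R t).invertibleOfIsUnitDet hunit
  have hLA : L - A = (R t)⁻¹ * R' t := by
    rw [← hRdiff, Matrix.inv_mul_cancel_left_of_invertible]
  have hBT' : (R' t).BlockTriangular OrderDual.toDual := by
    intro i j h
    have hij : i < j := h
    have hconst : HasDerivAt (fun s => R s i j) 0 t := by
      have : (fun s => R s i j) = fun _ => (0:ℝ) := funext fun s => hR s i j hij
      rw [this]; exact hasDerivAt_const t _
    exact ((hdR t i j).unique hconst)
  have hLAlow : (L - A).BlockTriangular OrderDual.toDual := by
    rw [hLA]
    exact ((Matrix.blockTriangular_inv_of_blockTriangular hBT)).mul hBT'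
  -- A = Mproj L
  have hupper : ∀ i j : Fin n, i < j → A i j = L i j := by
    intro i j hij
    have h0 : (L - A) i j = 0 := hLAlow (show OrderDual.toDual j < OrderDual.toDual i from hij)
    have := Matrix.sub_apply L A i j ▸ h0
    linarith [this]
  have hA : A = Mproj L := by
    ext i j
    rcases lt_trichotomy i j with hij | hij | hij
    · rw [Mproj, Matrix.of_apply, if_pos hij]
      exact hupper i j hij
    · subst hij
      have : Aᵀ i i = -A i i := by rw [hAskew]; rfl
      have h2 : A i i = -A i i := this
      rw [Mproj, Matrix.of_apply, if_neg (lt_irrefl i), if_neg (lt_irrefl i)]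
      linarith [h2]
    · have h2 : A i j = -A j i := by
        have : Aᵀ j i = (-A) j i := by rw [hAskew]
        simpa [Matrix.transpose_apply, Matrix.neg_apply] using this
      rw [Mproj, Matrix.of_apply, if_neg (not_lt.mpr hij.le), if_pos hij, h2,
        hupper j i hij]
  -- Q' = A * Q t
  have hQ' : Q' t = A * Q t := by
    rw [hAdef, mul_assoc, hQQ, mul_one]
  -- final matrix identity
  have hfinal : Q' t * L₀ * (Q t)ᵀ + (Q t * L₀) * (Q' t)ᵀ = Mproj L * L - L * Mproj L := by
    have h1 : Q' t * L₀ * (Q t)ᵀ = A * L := by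
      rw [hQ', hLdef]; simp [mul_assoc]
    have h2 : (Q t * L₀) * (Q' t)ᵀ = L * Aᵀ := by
      rw [hQ', Matrix.transpose_mul, hLdef]; simp [mul_assoc]
    rw [h1, h2, hAskew, ← hA]
    simp [mul_neg, sub_eq_add_neg]
  intro i j
  have hL1 : ∀ i j, HasDerivAt (fun s => (Q s * L₀) i j) ((Q' t * L₀) i j) t := by
    intro i j
    have := mulEntryDeriv (F := Q) (G := fun _ => L₀) (G' := 0) (hdQ t)
      (fun i j => hasDerivAt_const t (L₀ i j)) i j
    simpa using this
  have hD := mulEntryDeriv (F := fun s => Q s * L₀) (G := fun s => (Q s)ᵀ)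
    (F' := Q' t * L₀) (G' := (Q' t)ᵀ) hL1 hQt' i j
  have hrw : (Q' t * L₀ * (Q t)ᵀ + Q t * L₀ * (Q' t)ᵀ) i j
      = (Mproj L * L - L * Mproj L) i j := by rw [hfinal]
  rw [hrw] at hD
  exact hD
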